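/- arXiv:2011.10995 — 3 statements merged into one kernel-verified Lean document; each statement's English description precedes it below -/
import Mathlib

section
/- For every natural number n there exists a metabelian group G generated by two elements whose centralizer dimension is at least n, i.e., there exist subsets A_1, …, A_n of G with C(A_1) ⊋ C(A_2) ⊋ … ⊋ C(A_n). -/
/-- There exists a strictly descending chain `C(A 0) > C(A 1) > ⋯ > C(A (n-1))` of
centralizers of `n` subsets of `G`. -/
def CentralizerChain (G : Type*) [Group G] (n : ℕ) : Prop :=
  ∃ A : Fin n → Set G, StrictAnti fun i : Fin n => Subgroup.centralizer (A i)

/-- `G` is generated by two elements, is metabelian, and admits a strictly descending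
chain of `n` centralizers (so its centralizer dimension is at least `n`). -/
def TwoGeneratedMetabelianWithChain (G : Type) [Group G] (n : ℕ) : Prop :=
  (∃ a b : G, Subgroup.closure {a, b} = ⊤) ∧
    (∀ x y : G, x ∈ commutator G → y ∈ commutator G → x * y = y * x) ∧
    CentralizerChain G n

namespace Stmt8Aux

/-- Elements of the wreath-type group `(ZMod 2)^(ZMod m) ⋊ ℤ`. -/
@[ext]
structure W (m : ℕ) where
  f : ZMod m → ZMod 2
  k : ℤ

namespace W

variable {m : ℕ}

/-- The shift action of `ℤ` on the base. -/
def σ (k : ℤ) (g : ZMod m → ZMod 2) : ZMod m → ZMod 2 := fun i => g (i - (k : ZMod m))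

lemma σ_zero (g : ZMod m → ZMod 2) : σ 0 g = g := by funext i; simp [σ]

lemma σ_σ (k l : ℤ) (g : ZMod m → ZMod 2) : σ k (σ l g) = σ (k + l) g := by
  funext i; simp [σ, sub_sub]

lemma σ_add (k : ℤ) (g h : ZMod m → ZMod 2) : σ k (g + h) = σ k g + σ k h := rfl

lemma σ_neg (k : ℤ) (g : ZMod m → ZMod 2) : σ k (-g) = -(σ k g) := rfl

instance : Mul (W m) := ⟨fun x y => ⟨x.f + σ x.k y.f, x.k + y.k⟩⟩
instance : One (W m) := ⟨⟨0, 0⟩⟩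
instance : Inv (W m) := ⟨fun x => ⟨σ (-x.k) (-x.f), -x.k⟩⟩

@[simp] lemma mul_f (x y : W m) : (x * y).f = x.f + σ x.k y.f := rfl
@[simp] lemma mul_k (x y : W m) : (x * y).k = x.k + y.k := rfl
@[simp] lemma one_f : (1 : W m).f = 0 := rfl
@[simp] lemma one_k : (1 : W m).k = 0 := rfl
@[simp] lemma inv_f (x : W m) : (x⁻¹).f = σ (-x.k) (-x.f) := rfl
@[simp] lemma inv_k (x : W m) : (x⁻¹).k = -x.k := rfl

instance : Group (W m) :=
  Group.ofLeftAxioms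
    (fun a b c => by
      refine W.ext ?_ ?_
      · show a.f + σ a.k b.f + σ (a.k + b.k) c.f = a.f + σ a.k (b.f + σ b.k c.f)
        rw [σ_add, σ_σ, add_assoc]
      · show a.k + b.k + c.k = a.k + (b.k + c.k); ring)
    (fun a => by
      refine W.ext ?_ ?_
      · show (0 : ZMod m → ZMod 2) + σ 0 a.f = a.f
        rw [σ_zero, zero_add]
      · show 0 + a.k = a.k; ring)
    (fun a => by
      refine W.ext ?_ ?_
      · show σ (-a.k) (-a.f) + σ (-a.k) a.f = 0
        rw [← σ_add, neg_add_cancel]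
        funext i; simp [σ]
      · show -a.k + a.k = 0; ring)

end W

end Stmt8Aux

namespace Stmt8Aux
namespace W

open AddSubgroup

variable {m : ℕ}

/-- Indicator function of the subgroup of multiples of `c`. -/
noncomputable def ind (c : ZMod m) : ZMod m → ZMod 2 :=
  fun x => if x ∈ zmultiples c then (1 : ZMod 2) else 0

lemma ind_stab (c : ZMod m) (l : ZMod m) :
    (∀ x, ind c (x - l) = ind c x) ↔ l ∈ zmultiples c := by
  constructor
  · intro h
    have h0 : ind c (l - l) = ind c l := h l
    rw [sub_self] at h0
    have : ind c 0 = 1 := by simp [ind, zero_mem]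
    rw [this] at h0
    by_contra hl
    rw [ind, if_neg hl] at h0
    exact (by decide : (1:ZMod 2) ≠ 0) h0
  · intro hl x
    unfold ind
    congr 1
    simp only [eq_iff_iff]
    constructor
    · intro h; simpa using add_mem h hl
    · intro h; exact sub_mem h hl

lemma mem_centralizer_iff' (c : ZMod m) (z : W m) :
    z ∈ Subgroup.centralizer {(⟨ind c, 0⟩ : W m)} ↔ (z.k : ZMod m) ∈ zmultiples c := by
  rw [Subgroup.mem_centralizer_iff]
  simp only [Set.mem_singleton_iff, forall_eq]
  constructor
  · intro h
    have hf := congrArg W.f h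
    simp only [mul_f, σ_zero] at hf
    have : σ z.k (ind c) = ind c := by
      have := hf.symm
      rwa [add_comm z.f, add_right_cancel_iff] at this
    rw [← ind_stab c]
    intro x
    exact congrFun this x
  · intro h
    have hσ : σ z.k (ind c) = ind c := funext ((ind_stab c _).mpr h)
    refine W.ext ?_ ?_
    · show ind c + σ 0 z.f = z.f + σ z.k (ind c)
      rw [σ_zero, hσ, add_comm]
    · show 0 + z.k = z.k + 0; ring

end W
end Stmt8Aux

namespace Stmt8Aux
namespace W

open AddSubgroup

lemma pow_mem_zmultiples_pow {m i j : ℕ} (hij : i ≤ j) :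
    ((2 : ZMod m) ^ j) ∈ zmultiples ((2 : ZMod m) ^ i) := by
  refine ⟨(2 ^ (j - i) : ℤ), ?_⟩
  show (2 ^ (j - i) : ℤ) • ((2 : ZMod m) ^ i) = (2 : ZMod m) ^ j
  rw [zsmul_eq_mul]
  push_cast
  rw [← pow_add]
  congr 1
  omega

lemma pow_not_mem_zmultiples_pow {n i j : ℕ} (hij : i < j) (hj : j ≤ n) :
    ((2 : ZMod (2 ^ n)) ^ i) ∉ zmultiples ((2 : ZMod (2 ^ n)) ^ j) := by
  rintro ⟨c, hc⟩
  have hc' : (c : ZMod (2 ^ n)) * (2 : ZMod (2 ^ n)) ^ j = (2 : ZMod (2 ^ n)) ^ i := by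
    rw [← zsmul_eq_mul]; exact hc
  have hdvd : (2:ℕ) ^ (i + 1) ∣ 2 ^ n := pow_dvd_pow 2 (by omega)
  let ψ := ZMod.castHom hdvd (ZMod (2 ^ (i + 1)))
  have hψ := congrArg ψ hc'
  rw [map_mul, map_pow, map_pow, map_ofNat] at hψ
  have hzero : (2 : ZMod (2 ^ (i + 1))) ^ j = 0 := by
    have : ((2 ^ j : ℕ) : ZMod (2 ^ (i + 1))) = 0 := by
      rw [ZMod.natCast_eq_zero_iff]
      exact pow_dvd_pow 2 (by omega)
    rw [← this]; push_cast; ring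
  rw [hzero, mul_zero] at hψ
  have : ((2 ^ i : ℕ) : ZMod (2 ^ (i + 1))) = 0 := by
    push_cast
    exact hψ.symm
  rw [ZMod.natCast_eq_zero_iff] at this
  have := (Nat.pow_dvd_pow_iff_le_right (by norm_num : 1 < 2)).mp this
  omega

end W
end Stmt8Aux

namespace Stmt8Aux
namespace W

open AddSubgroup

open scoped commutatorElement

variable {m : ℕ}

lemma σ_zero_fun (k : ℤ) : σ k (0 : ZMod m → ZMod 2) = 0 := rfl

lemma σ_single (k : ℤ) :
    σ k (Pi.single 0 1 : ZMod m → ZMod 2) = Pi.single ((k : ZMod m)) 1 := by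
  funext y
  simp only [σ, Pi.single_apply]
  congr 1
  simp [sub_eq_zero]

/-- the shift generator -/
def b : W m := ⟨0, 1⟩
/-- the lamp generator -/
noncomputable def a : W m := ⟨Pi.single 0 1, 0⟩

lemma b_zpow (l : ℤ) : (b : W m) ^ l = ⟨0, l⟩ := by
  induction l using Int.induction_on with
  | zero => rfl
  | succ k ih =>
      rw [zpow_add_one, ih]
      refine W.ext ?_ ?_
      · show (0 : ZMod m → ZMod 2) + σ _ 0 = 0
        rw [σ_zero_fun, add_zero]
      · show ((k : ℤ)) + 1 = (k + 1 : ℤ); ring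
  | pred k ih =>
      rw [zpow_sub_one, ih]
      refine W.ext ?_ ?_
      · show (0 : ZMod m → ZMod 2) + σ _ (σ _ (-0)) = 0
        rw [neg_zero, σ_zero_fun, σ_zero_fun, add_zero]
      · show (-(k : ℤ)) + (-(1 : ℤ)) = (-(k : ℤ) - 1); ring

lemma single_mem_closure [NeZero m] (x : ZMod m) :
    (⟨Pi.single x 1, 0⟩ : W m) ∈ Subgroup.closure {a, b} := by
  set T := Subgroup.closure ({a, b} : Set (W m)) with hT
  have hb : (b : W m) ∈ T := Subgroup.subset_closure (by simp)
  have ha : (a : W m) ∈ T := Subgroup.subset_closure (by simp)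
  have hcast : ((x.val : ℤ) : ZMod m) = x := by
    push_cast
    exact ZMod.natCast_rightInverse x
  have key : (⟨0, (x.val : ℤ)⟩ : W m) * a * (⟨0, (x.val : ℤ)⟩ : W m)⁻¹
      = ⟨Pi.single x 1, 0⟩ := by
    refine W.ext ?_ ?_
    · show (0 + σ (x.val : ℤ) (Pi.single 0 1)) + σ _ (σ _ (-0)) = Pi.single x 1
      rw [neg_zero, σ_zero_fun, σ_zero_fun, add_zero, zero_add, σ_single, hcast]
    · show ((x.val : ℤ) + 0) + (-((x.val : ℤ) + 0)) = 0; ring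
  rw [← key]
  have hbl : (⟨0, (x.val : ℤ)⟩ : W m) ∈ T := by rw [← b_zpow]; exact zpow_mem hb _
  exact mul_mem (mul_mem hbl ha) (inv_mem hbl)

lemma closure_eq_top [NeZero m] : Subgroup.closure ({a, b} : Set (W m)) = ⊤ := by
  set T := Subgroup.closure ({a, b} : Set (W m)) with hT
  rw [eq_top_iff]
  intro z _
  -- base elements form an additive subgroup of members
  let S : AddSubgroup (ZMod m → ZMod 2) :=
    { carrier := {g | (⟨g, 0⟩ : W m) ∈ T}
      zero_mem' := by
        show (⟨0, 0⟩ : W m) ∈ T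
        exact one_mem T
      add_mem' := by
        intro g h hg hh
        have : (⟨g, 0⟩ : W m) * ⟨h, 0⟩ = ⟨g + h, 0⟩ := by
          refine W.ext ?_ ?_
          · show g + σ 0 h = g + h; rw [σ_zero]
          · show (0 : ℤ) + 0 = 0; ring
        show (⟨g + h, 0⟩ : W m) ∈ T
        rw [← this]; exact mul_mem hg hh
      neg_mem' := by
        intro g hg
        have : (⟨g, 0⟩ : W m)⁻¹ = ⟨-g, 0⟩ := by
          refine W.ext ?_ ?_
          · show σ (-(0:ℤ)) (-g) = -g
            rw [neg_zero, σ_zero]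
          · show -(0:ℤ) = 0; ring
        show (⟨-g, 0⟩ : W m) ∈ T
        rw [← this]; exact inv_mem hg }
  have hS : ∀ g : ZMod m → ZMod 2, (⟨g, 0⟩ : W m) ∈ T := by
    intro g
    have : g ∈ S := by
      rw [← Finset.univ_sum_single g]
      refine AddSubgroup.sum_mem S ?_
      intro x _
      have h2 : ∀ c : ZMod 2, c = 0 ∨ c = 1 := by decide
      rcases h2 (g x) with h | h
      · rw [h, Pi.single_zero]; exact S.zero_mem
      · rw [h]; exact single_mem_closure x
    exact this
  have hz : z = (⟨z.f, 0⟩ : W m) * ⟨0, z.k⟩ := by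
    refine W.ext ?_ ?_
    · show z.f = z.f + σ 0 0
      rw [σ_zero, add_zero]
    · show z.k = 0 + z.k; ring
  rw [hz]
  refine mul_mem (hS z.f) ?_
  rw [← b_zpow]
  exact zpow_mem (Subgroup.subset_closure (by simp)) _

lemma metabelian (x y : W m) (hx : x ∈ commutator (W m)) (hy : y ∈ commutator (W m)) :
    x * y = y * x := by
  have hk : ∀ z : W m, z ∈ commutator (W m) → z.k = 0 := by
    have hle : commutator (W m) ≤
        { carrier := {z : W m | z.k = 0}
          one_mem' := rfl
          mul_mem' := by
            intro p q hp hq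
            show (p * q).k = 0
            rw [mul_k, hp, hq]; ring
          inv_mem' := by
            intro p hp
            show (p⁻¹).k = 0
            rw [inv_k, hp]; ring } := by
      rw [commutator, Subgroup.commutator_le]
      intro p _ q _
      show (⁅p, q⁆).k = 0
      rw [commutatorElement_def]
      simp only [mul_k, inv_k]
      ring
    intro z hz
    exact hle hz
  refine W.ext ?_ ?_
  · show x.f + σ x.k y.f = y.f + σ y.k x.f
    rw [hk x hx, hk y hy, σ_zero, σ_zero, add_comm]
  · show x.k + y.k = y.k + x.k; ring

end W
end Stmt8Aux

theorem stmt8 (n : ℕ) :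
    ∃ (G : Type) (instG : Group G), @TwoGeneratedMetabelianWithChain G instG n := by
  haveI : NeZero (2 ^ n) := ⟨pow_ne_zero n two_ne_zero⟩
  refine ⟨Stmt8Aux.W (2 ^ n), inferInstance, ?_, Stmt8Aux.W.metabelian, ?_⟩
  · exact ⟨Stmt8Aux.W.a, Stmt8Aux.W.b, Stmt8Aux.W.closure_eq_top⟩
  · refine ⟨fun i => {(⟨Stmt8Aux.W.ind ((2 : ZMod (2 ^ n)) ^ (i : ℕ)), 0⟩ : Stmt8Aux.W (2 ^ n))},
      ?_⟩
    intro i j hij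
    have hij' : (i : ℕ) < (j : ℕ) := hij
    rw [SetLike.lt_iff_le_and_exists]
    constructor
    · intro z hz
      rw [Stmt8Aux.W.mem_centralizer_iff'] at hz ⊢
      exact AddSubgroup.zmultiples_le_of_mem
        (Stmt8Aux.W.pow_mem_zmultiples_pow hij'.le) hz
    · refine ⟨⟨0, ((2 : ℤ) ^ (i : ℕ))⟩, ?_, ?_⟩
      · rw [Stmt8Aux.W.mem_centralizer_iff']
        have : (((2 : ℤ) ^ (i : ℕ) : ℤ) : ZMod (2 ^ n)) = (2 : ZMod (2 ^ n)) ^ (i : ℕ) := by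
          push_cast; ring
        rw [this]
        exact AddSubgroup.mem_zmultiples _
      · rw [Stmt8Aux.W.mem_centralizer_iff']
        have : (((2 : ℤ) ^ (i : ℕ) : ℤ) : ZMod (2 ^ n)) = (2 : ZMod (2 ^ n)) ^ (i : ℕ) := by
          push_cast; ring
        rw [this]
        exact Stmt8Aux.W.pow_not_mem_zmultiples_pow hij' (j.isLt.le)
end

section
/- Let Δ be a finite simple graph that is not connected (Δ has at least two connected components). Then the partially commutative metabelian group M_Δ is not decomposable into a direct product: whenever M_Δ is isomorphic to a direct product A × B of groups, A or B is the trivial group. -/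
open scoped commutatorElement in
/-- The commutator relators corresponding to the edges of a simple graph. -/
def pcRels {V : Type} (Δ : SimpleGraph V) : Set (FreeGroup V) :=
  {w | ∃ x y : V, Δ.Adj x y ∧ w = ⁅FreeGroup.of x, FreeGroup.of y⁆}

/-- The (free) partially commutative group `F_Δ` defined by a simple graph `Δ`. -/
abbrev pcGroup {V : Type} (Δ : SimpleGraph V) : Type := PresentedGroup (pcRels Δ)

instance pcSecondDerivedNormal {V : Type} (Δ : SimpleGraph V) :
    (derivedSeries (pcGroup Δ) 2).Normal :=
  derivedSeries_normal _ _

/-- The partially commutative metabelian group `M_Δ = F_Δ / F_Δ''`. -/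
abbrev pcMetabelianGroup {V : Type} (Δ : SimpleGraph V) : Type :=
  pcGroup Δ ⧸ derivedSeries (pcGroup Δ) 2

/-- The image in `M_Δ` of the vertex `x`. -/
def pcGen {V : Type} (Δ : SimpleGraph V) (x : V) : pcMetabelianGroup Δ :=
  QuotientGroup.mk (PresentedGroup.of x)


namespace Stmt13Aux

variable {V : Type}

abbrev QV (V : Type) := Multiplicative (V → ℤ)
abbrev RV (V : Type) := MonoidAlgebra ℤ (QV V)

noncomputable def iota (V : Type) : QV V →* RV V := MonoidAlgebra.of ℤ (QV V)

@[ext] structure NV (V : Type) where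
  q : QV V
  t : RV V × RV V

noncomputable instance : Mul (NV V) := ⟨fun g h => ⟨g.q * h.q, g.t + iota V g.q • h.t⟩⟩
noncomputable instance : One (NV V) := ⟨⟨1, 0⟩⟩
noncomputable instance : Inv (NV V) := ⟨fun g => ⟨g.q⁻¹, -(iota V g.q⁻¹ • g.t)⟩⟩

lemma mul_def (g h : NV V) : g * h = ⟨g.q * h.q, g.t + iota V g.q • h.t⟩ := rfl
lemma one_def : (1 : NV V) = ⟨1, 0⟩ := rfl

noncomputable instance : Group (NV V) where
  mul_assoc a b c := by
    simp only [mul_def, map_mul, mul_smul, smul_add, add_assoc, mul_assoc]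
  one_mul a := by simp [mul_def, one_def]
  mul_one a := by simp [mul_def, one_def]
  inv_mul_cancel a := by
    show (⟨a.q⁻¹, -(iota V a.q⁻¹ • a.t)⟩ : NV V) * a = 1
    simp [mul_def, one_def]

noncomputable def pi (V : Type) : NV V →* QV V :=
  { toFun := NV.q, map_one' := rfl, map_mul' := fun _ _ => rfl }

lemma commute_iff (g h : NV V) :
    Commute g h ↔ (iota V g.q - 1) • h.t = (iota V h.q - 1) • g.t := by
  show g * h = h * g ↔ _
  rw [mul_def, mul_def, NV.mk.injEq]
  rw [sub_smul, one_smul, sub_smul, one_smul, sub_eq_sub_iff_add_eq_add]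
  constructor
  · rintro ⟨-, h2⟩
    rw [add_comm g.t, add_comm h.t] at h2
    exact h2
  · intro h2
    refine ⟨mul_comm _ _, ?_⟩
    rw [add_comm g.t, add_comm h.t]
    exact h2

lemma iota_eq_one {q : QV V} (h : iota V q = 1) : q = 1 :=
  MonoidAlgebra.of_injective (by rw [map_one]; exact h)

lemma kerpi_comm {g h : NV V} (hg : g.q = 1) (hh : h.q = 1) : Commute g h := by
  rw [commute_iff, hg, hh, map_one, sub_self, zero_smul, zero_smul]

lemma factA {g k : NV V} (hk : k.q = 1) (hw : k.t ≠ 0) (h : Commute g k) : g.q = 1 := by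
  rw [commute_iff, hk, map_one, sub_self, zero_smul] at h
  have h1 : (iota V g.q - 1) * k.t.1 = 0 := congrArg Prod.fst h
  have h2 : (iota V g.q - 1) * k.t.2 = 0 := congrArg Prod.snd h
  have : iota V g.q - 1 = 0 := by
    rcases mul_eq_zero.mp h1 with h' | h'
    · exact h'
    rcases mul_eq_zero.mp h2 with h'' | h''
    · exact h''
    exact absurd (Prod.ext h' h'') hw
  exact iota_eq_one (by rwa [sub_eq_zero] at this)

lemma factB {g h k : NV V} (hk : k.q ≠ 1) (h1 : Commute g k) (h2 : Commute h k) :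
    Commute g h := by
  rw [commute_iff] at h1 h2 ⊢
  have hc : iota V k.q - 1 ≠ 0 := fun hc => hk (iota_eq_one (by rwa [sub_eq_zero] at hc))
  have key : (iota V k.q - 1) • ((iota V g.q - 1) • h.t) =
      (iota V k.q - 1) • ((iota V h.q - 1) • g.t) := by
    calc (iota V k.q - 1) • ((iota V g.q - 1) • h.t)
        = (iota V g.q - 1) • ((iota V k.q - 1) • h.t) := smul_comm _ _ _
      _ = (iota V g.q - 1) • ((iota V h.q - 1) • k.t) := by rw [h2]
      _ = (iota V h.q - 1) • ((iota V g.q - 1) • k.t) := smul_comm _ _ _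
      _ = (iota V h.q - 1) • ((iota V k.q - 1) • g.t) := by rw [h1]
      _ = (iota V k.q - 1) • ((iota V h.q - 1) • g.t) := smul_comm _ _ _
  exact smul_right_injective (RV V × RV V) hc key

lemma derived_two (V : Type) : derivedSeries (NV V) 2 = ⊥ := by
  have h1 : derivedSeries (NV V) 1 ≤ (pi V).ker := by
    rw [derivedSeries_one]
    exact Abelianization.commutator_subset_ker (pi V)
  rw [show (2:ℕ) = 1 + 1 from rfl, derivedSeries_succ]
  refine le_bot_iff.mp ((Subgroup.commutator_mono h1 h1).trans ?_)
  rw [Subgroup.commutator_le]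
  intro g hg h hh
  rw [Subgroup.mem_bot, commutatorElement_eq_one_iff_commute]
  exact kerpi_comm hg hh


section Graph

variable {V : Type} [DecidableEq V] (Δ : SimpleGraph V) (c : V → Bool)

noncomputable def qgen (x : V) : QV V := Multiplicative.ofAdd (Pi.single x (1:ℤ))

lemma qgen_ne_one (x : V) : qgen (V := V) x ≠ 1 := by
  intro h
  have := congrFun (congrArg Multiplicative.toAdd h) x
  simp [qgen] at this

noncomputable def fgen (x : V) : NV V :=
  ⟨qgen x, if c x then (iota V (qgen x) - 1, 0) else (0, iota V (qgen x) - 1)⟩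

lemma fgen_commute {x y : V} (h : c x = c y) : Commute (fgen c x) (fgen c y) := by
  rw [commute_iff]
  rcases hcx : c x
  · have hcy : c y = false := h ▸ hcx
    simp [fgen, hcx, hcy, Prod.ext_iff, mul_comm]
  · have hcy : c y = true := h ▸ hcx
    simp [fgen, hcx, hcy, Prod.ext_iff, mul_comm]

lemma rels_one (hc : ∀ ⦃x y⦄, Δ.Adj x y → c x = c y) : ∀ r ∈ pcRels Δ, FreeGroup.lift (fgen c) r = 1 := by
  rintro r ⟨x, y, hxy, rfl⟩
  rw [map_commutatorElement, FreeGroup.lift_apply_of, FreeGroup.lift_apply_of,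
    commutatorElement_eq_one_iff_commute]
  exact fgen_commute c (hc hxy)

noncomputable def phi0 (hc : ∀ ⦃x y⦄, Δ.Adj x y → c x = c y) : pcGroup Δ →* NV V := PresentedGroup.toGroup (rels_one Δ c hc)

lemma D2_le_ker (hc : ∀ ⦃x y⦄, Δ.Adj x y → c x = c y) : derivedSeries (pcGroup Δ) 2 ≤ (phi0 Δ c hc).ker := by
  intro g hg
  have h1 : (phi0 Δ c hc) g ∈ (derivedSeries (pcGroup Δ) 2).map (phi0 Δ c hc) :=
    Subgroup.mem_map_of_mem _ hg
  have h2 := map_derivedSeries_le_derivedSeries (phi0 Δ c hc) 2 h1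
  rw [derived_two] at h2
  simpa [MonoidHom.mem_ker] using h2

noncomputable def phi (hc : ∀ ⦃x y⦄, Δ.Adj x y → c x = c y) : pcMetabelianGroup Δ →* NV V :=
  QuotientGroup.lift _ (phi0 Δ c hc) (D2_le_ker Δ c hc)

lemma phi_gen (hc : ∀ ⦃x y⦄, Δ.Adj x y → c x = c y) (x : V) : phi Δ c hc (pcGen Δ x) = fgen c x := by
  show QuotientGroup.lift _ (phi0 Δ c hc) (D2_le_ker Δ c hc)
      (QuotientGroup.mk (PresentedGroup.of x)) = _
  rw [QuotientGroup.lift_mk']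
  exact PresentedGroup.toGroup.of _

lemma pc_derived_two : derivedSeries (pcMetabelianGroup Δ) 2 = ⊥ := by
  rw [← map_derivedSeries_eq
    (QuotientGroup.mk'_surjective (derivedSeries (pcGroup Δ) 2)) 2]
  exact (Subgroup.map_eq_bot_iff _).mpr (by rw [QuotientGroup.ker_mk'])

open scoped commutatorElement in
lemma pc_comm_abelian {g h : pcMetabelianGroup Δ}
    (hg : g ∈ commutator (pcMetabelianGroup Δ)) (hh : h ∈ commutator (pcMetabelianGroup Δ)) :
    Commute g h := by
  have : ⁅g, h⁆ ∈ derivedSeries (pcMetabelianGroup Δ) 2 := by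
    rw [show derivedSeries (pcMetabelianGroup Δ) 2
        = ⁅derivedSeries (pcMetabelianGroup Δ) 1, derivedSeries (pcMetabelianGroup Δ) 1⁆
        from derivedSeries_succ _ 1, derivedSeries_one]
    exact Subgroup.commutator_mem_commutator hg hh
  rw [pc_derived_two, Subgroup.mem_bot] at this
  rwa [← commutatorElement_eq_one_iff_commute]

variable [Fintype V]

noncomputable def beta : QV V →* Abelianization (pcMetabelianGroup Δ) where
  toFun q := ∏ x : V, (Abelianization.of (pcGen Δ x)) ^ (Multiplicative.toAdd q x)
  map_one' := by simp
  map_mul' a b := by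
    simp only [toAdd_mul, Pi.add_apply, zpow_add, Finset.prod_mul_distrib]

lemma beta_pi_phi (hc : ∀ ⦃x y⦄, Δ.Adj x y → c x = c y) (g : pcMetabelianGroup Δ) :
    beta Δ (pi V (phi Δ c hc g)) = Abelianization.of g := by
  have key : (beta Δ).comp ((pi V).comp (phi Δ c hc)) =
      (Abelianization.of (G := pcMetabelianGroup Δ)) := by
    apply QuotientGroup.monoidHom_ext
    apply PresentedGroup.ext
    intro x
    show beta Δ (pi V (phi Δ c hc (pcGen Δ x))) = Abelianization.of (pcGen Δ x)
    rw [phi_gen]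
    show ∏ y : V, (Abelianization.of (pcGen Δ y)) ^ (Multiplicative.toAdd (qgen x) y) =
      Abelianization.of (pcGen Δ x)
    rw [Finset.prod_eq_single x]
    · simp [qgen]
    · intro y _ hyx
      simp [qgen, Pi.single_eq_of_ne hyx]
    · intro h; exact absurd (Finset.mem_univ x) h
  exact DFunLike.congr_fun key g

lemma mem_commutator_of_phi_eq_one (hc : ∀ ⦃x y⦄, Δ.Adj x y → c x = c y) {g : pcMetabelianGroup Δ} (hg : phi Δ c hc g = 1) :
    g ∈ commutator (pcMetabelianGroup Δ) := by
  have h1 : Abelianization.of g = 1 := by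
    rw [← beta_pi_phi Δ c hc g, hg, map_one, map_one]
  exact (QuotientGroup.eq_one_iff g).mp h1

end Graph
end Stmt13Aux

open Stmt13Aux

theorem stmt13 {V : Type} [Fintype V] (Δ : SimpleGraph V)
    (hdisc : ¬ Δ.Preconnected) (A B : Type) [Group A] [Group B]
    (e : pcMetabelianGroup Δ ≃* A × B) :
    (∀ a : A, a = 1) ∨ (∀ b : B, b = 1) := by
  classical
  rw [SimpleGraph.Preconnected] at hdisc
  push_neg at hdisc
  obtain ⟨u, v, huv⟩ := hdisc
  by_contra hcon
  push_neg at hcon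
  obtain ⟨hA0, hB0⟩ := hcon
  obtain ⟨a₀, ha₀⟩ := hA0
  obtain ⟨b₀, hb₀⟩ := hB0
  set c : V → Bool := fun x => decide (Δ.Reachable u x) with hcdef
  have hc : ∀ ⦃x y⦄, Δ.Adj x y → c x = c y := by
    intro x y hxy
    simp only [hcdef, decide_eq_decide]
    exact ⟨fun h => h.trans hxy.reachable, fun h => h.trans hxy.symm.reachable⟩
  set φ := phi Δ c hc with hφdef
  set mA : A →* pcMetabelianGroup Δ := e.symm.toMonoidHom.comp (MonoidHom.inl A B) with hmA
  set mB : B →* pcMetabelianGroup Δ := e.symm.toMonoidHom.comp (MonoidHom.inr A B) with hmB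
  have hABM : ∀ (a : A) (b : B), Commute (mA a) (mB b) := by
    intro a b
    have h0 : Commute ((MonoidHom.inl A B) a) ((MonoidHom.inr A B) b) := by
      show _ * _ = _ * _
      simp [Prod.ext_iff]
    exact h0.map e.symm.toMonoidHom
  have hAB : ∀ (a : A) (b : B), Commute (φ (mA a)) (φ (mB b)) :=
    fun a b => (hABM a b).map φ
  have heB : ∀ b : B, e (mB b) = ((1 : A), b) := fun b => e.apply_symm_apply _
  have heA : ∀ a : A, e (mA a) = (a, (1 : B)) := fun a => e.apply_symm_apply _
  have hdec : ∀ g : pcMetabelianGroup Δ, g = mA (e g).1 * mB (e g).2 := by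
    intro g
    have h1 : ((e g).1, (1 : B)) * ((1 : A), (e g).2) = e g := by
      simp [Prod.ext_iff]
    calc g = e.symm (e g) := (e.symm_apply_apply g).symm
      _ = e.symm (((e g).1, (1 : B)) * ((1 : A), (e g).2)) := by rw [h1]
      _ = mA (e g).1 * mB (e g).2 := by rw [map_mul]; rfl
  -- if one side has nonabelian image, the other side collapses entirely
  have hcu : c u = true := decide_eq_true (SimpleGraph.Reachable.refl u)
  have hcv : c v = false := decide_eq_false huv
  by_cases HA : ∀ a a' : A, Commute (φ (mA a)) (φ (mA a'))
  · by_cases HB : ∀ b b' : B, Commute (φ (mB b)) (φ (mB b'))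
    · -- both images abelian: contradiction with non-commuting generators u, v
      have hcomm : Commute (φ (pcGen Δ u)) (φ (pcGen Δ v)) := by
        rw [hdec (pcGen Δ u), hdec (pcGen Δ v), map_mul, map_mul]
        exact Commute.mul_left
          ((HA _ _).mul_right (hAB _ _))
          ((hAB _ _).symm.mul_right (HB _ _))
      rw [hφdef, phi_gen, phi_gen, commute_iff] at hcomm
      simp only [fgen, hcu, hcv, if_true, if_false] at hcomm
      have h1 : (iota V (qgen v) - 1) * (iota V (qgen u) - 1) = 0 := by
        have h2 := congrArg Prod.fst hcomm
        simpa using h2.symm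
      rcases mul_eq_zero.mp h1 with h | h
      · exact qgen_ne_one v (iota_eq_one (by rwa [sub_eq_zero] at h))
      · exact qgen_ne_one u (iota_eq_one (by rwa [sub_eq_zero] at h))
    · -- image of B nonabelian : then image of A is trivial, so A = A ∩ M' is trivial
      push_neg at HB
      obtain ⟨b₁, b₂, hnb⟩ := HB
      have hA1 : ∀ a : A, φ (mA a) = 1 := by
        intro a
        by_cases hk : (φ (mA a)).q = 1
        · by_cases hw : (φ (mA a)).t = 0
          · exact NV.ext hk hw
          · exfalso
            have h1 : (φ (mB b₁)).q = 1 := factA hk hw (hAB a b₁).symm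
            have h2 : (φ (mB b₂)).q = 1 := factA hk hw (hAB a b₂).symm
            exact hnb (kerpi_comm h1 h2)
        · exfalso
          exact hnb (factB hk (hAB a b₁).symm (hAB a b₂).symm)
      have hAM : ∀ a : A, mA a ∈ commutator (pcMetabelianGroup Δ) :=
        fun a => mem_commutator_of_phi_eq_one Δ c hc (hA1 a)
      have hAcomm : ∀ a a' : A, Commute a a' := by
        intro a a'
        have h3 : Commute (mA a) (mA a') := pc_comm_abelian Δ (hAM a) (hAM a')
        have h4 := h3.map e.toMonoidHom
        have h5 : ∀ a : A, e.toMonoidHom (mA a) = (a, (1 : B)) := heA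
        rw [h5, h5] at h4
        have h6 := congrArg Prod.fst h4
        exact (by simpa using h6 : a * a' = a' * a)
      have ha0' : a₀ ∈ commutator A := by
        have h6 : commutator (pcMetabelianGroup Δ) ≤
            Subgroup.comap ((MonoidHom.fst A B).comp e.toMonoidHom) (commutator A) := by
          rw [commutator_def, Subgroup.commutator_le]
          intro g _ h _
          rw [Subgroup.mem_comap, map_commutatorElement]
          exact Subgroup.commutator_mem_commutator (Subgroup.mem_top _) (Subgroup.mem_top _)
        have h7 := h6 (hAM a₀)
        rw [Subgroup.mem_comap] at h7
        simpa [heA a₀] using h7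
      have hbot : commutator A = ⊥ := by
        rw [commutator_def]
        refine le_bot_iff.mp (Subgroup.commutator_le.mpr ?_)
        intro g _ h _
        rw [Subgroup.mem_bot, commutatorElement_eq_one_iff_commute]
        exact hAcomm g h
      rw [hbot] at ha0'
      exact ha₀ (Subgroup.mem_bot.mp ha0')
  · -- image of A nonabelian : then B is trivial
    push_neg at HA
    obtain ⟨a₁, a₂, hna⟩ := HA
    have hB1 : ∀ b : B, φ (mB b) = 1 := by
      intro b
      by_cases hk : (φ (mB b)).q = 1
      · by_cases hw : (φ (mB b)).t = 0
        · exact NV.ext hk hw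
        · exfalso
          have h1 : (φ (mA a₁)).q = 1 := factA hk hw (hAB a₁ b)
          have h2 : (φ (mA a₂)).q = 1 := factA hk hw (hAB a₂ b)
          exact hna (kerpi_comm h1 h2)
      · exfalso
        exact hna (factB hk (hAB a₁ b) (hAB a₂ b))
    have hBM : ∀ b : B, mB b ∈ commutator (pcMetabelianGroup Δ) :=
      fun b => mem_commutator_of_phi_eq_one Δ c hc (hB1 b)
    have hBcomm : ∀ b b' : B, Commute b b' := by
      intro b b'
      have h3 : Commute (mB b) (mB b') := pc_comm_abelian Δ (hBM b) (hBM b')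
      have h4 := h3.map e.toMonoidHom
      have h5 : ∀ b : B, e.toMonoidHom (mB b) = ((1 : A), b) := heB
      rw [h5, h5] at h4
      have h6 := congrArg Prod.snd h4
      exact (by simpa using h6 : b * b' = b' * b)
    have hb0' : b₀ ∈ commutator B := by
      have h6 : commutator (pcMetabelianGroup Δ) ≤
          Subgroup.comap ((MonoidHom.snd A B).comp e.toMonoidHom) (commutator B) := by
        rw [commutator_def, Subgroup.commutator_le]
        intro g _ h _
        rw [Subgroup.mem_comap, map_commutatorElement]
        exact Subgroup.commutator_mem_commutator (Subgroup.mem_top _) (Subgroup.mem_top _)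
      have h7 := h6 (hBM b₀)
      rw [Subgroup.mem_comap] at h7
      simpa [heB b₀] using h7
    have hbot : commutator B = ⊥ := by
      rw [commutator_def]
      refine le_bot_iff.mp (Subgroup.commutator_le.mpr ?_)
      intro g _ h _
      rw [Subgroup.mem_bot, commutatorElement_eq_one_iff_commute]
      exact hBcomm g h
    rw [hbot] at hb0'
    exact hb₀ (Subgroup.mem_bot.mp hb0')
end

section
/- Let R be an infinite commutative integral domain of characteristic different from 2, let Γ = (A;E) be a finite simple graph, and let a_i, a_j ∈ A be non-adjacent vertices of Γ. Then the annihilator of the element ⁅a_i, a_j⁆ of the R[A]-module L' (the derived ideal of ℳ_R(A;Γ)) equals the ideal I^Γ_{i,j} of R[A]. -/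
/-- The Lie ideal of the free Lie algebra generated by the brackets of
adjacent vertices of the graph `Γ`. -/
noncomputable def pcLieRels (R : Type) [CommRing R] {A : Type} (Γ : SimpleGraph A) :
    LieIdeal R (FreeLieAlgebra R A) :=
  LieSubmodule.lieSpan R (FreeLieAlgebra R A)
    {x | ∃ a b : A, Γ.Adj a b ∧ x = ⁅FreeLieAlgebra.of R a, FreeLieAlgebra.of R b⁆}

/-- The partially commutative Lie `R`-algebra `ℒ_R(A;Γ)` defined by a graph `Γ`. -/
abbrev pcLieAlgebra (R : Type) [CommRing R] {A : Type} (Γ : SimpleGraph A) : Type :=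
  FreeLieAlgebra R A ⧸ pcLieRels R Γ

/-- The image in `ℒ_R(A;Γ)` of the vertex `a`. -/
noncomputable def pcLieGen (R : Type) [CommRing R] {A : Type} (Γ : SimpleGraph A) (a : A) :
    pcLieAlgebra R Γ :=
  LieSubmodule.Quotient.mk (N := pcLieRels R Γ) (FreeLieAlgebra.of R a)

/-- The partially commutative metabelian Lie `R`-algebra `ℳ_R(A;Γ)`:
the quotient of `ℒ_R(A;Γ)` by its second derived ideal. -/
abbrev pcMetabelianLieAlgebra (R : Type) [CommRing R] {A : Type} (Γ : SimpleGraph A) : Type :=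
  pcLieAlgebra R Γ ⧸ LieAlgebra.derivedSeries R (pcLieAlgebra R Γ) 2

/-- The image in `ℳ_R(A;Γ)` of the vertex `a`. -/
noncomputable def pcMetLieGen (R : Type) [CommRing R] {A : Type} (Γ : SimpleGraph A) (a : A) :
    pcMetabelianLieAlgebra R Γ :=
  LieSubmodule.Quotient.mk (N := LieAlgebra.derivedSeries R (pcLieAlgebra R Γ) 2)
    (pcLieGen R Γ a)

/-- The derived ideal `L'` of the partially commutative metabelian Lie algebra. -/
noncomputable abbrev pcMetDerivedIdeal (R : Type) [CommRing R] {A : Type}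
    (Γ : SimpleGraph A) : LieIdeal R (pcMetabelianLieAlgebra R Γ) :=
  LieAlgebra.derivedSeries R (pcMetabelianLieAlgebra R Γ) 1

/-- The adjoint action of an element of `ℳ_R(A;Γ)`, restricted to an
`R`-linear endomorphism of the derived ideal `L'`. -/
noncomputable def pcAdEnd (R : Type) [CommRing R] {A : Type} (Γ : SimpleGraph A)
    (x : pcMetabelianLieAlgebra R Γ) : Module.End R (pcMetDerivedIdeal R Γ) where
  toFun y := ⟨⁅x, (y : pcMetabelianLieAlgebra R Γ)⁆, (pcMetDerivedIdeal R Γ).lie_mem y.2⟩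
  map_add' y z := Subtype.ext (by simp)
  map_smul' r y := Subtype.ext (by simp)

/-- The bracket `⁅a_i, a_j⁆` of two generators, as an element of the derived ideal. -/
noncomputable def pcBracketGen (R : Type) [CommRing R] {A : Type} (Γ : SimpleGraph A)
    (ai aj : A) : pcMetDerivedIdeal R Γ :=
  ⟨⁅pcMetLieGen R Γ ai, pcMetLieGen R Γ aj⁆, by
    show ⁅pcMetLieGen R Γ ai, pcMetLieGen R Γ aj⁆ ∈
      ⁅(⊤ : LieIdeal R (pcMetabelianLieAlgebra R Γ)), (⊤ : LieIdeal R (pcMetabelianLieAlgebra R Γ))⁆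
    exact LieSubmodule.lie_mem_lie (LieSubmodule.mem_top _) (LieSubmodule.mem_top _)⟩

/-- The ideal `I^Γ_{i,j}` of `R[A]`: the ideal generated by the monomials
`b_1 ⋯ b_s` over all paths `(a_i, b_1, …, b_s, a_j)` in `Γ` joining `a_i` to `a_j`
(it is the zero ideal when `a_i` and `a_j` lie in different connected components). -/
noncomputable def pcPathIdeal (R : Type) [CommRing R] {A : Type} (Γ : SimpleGraph A) (ai aj : A) :
    Ideal (MvPolynomial A R) :=
  Ideal.span {p : MvPolynomial A R | ∃ w : Γ.Walk ai aj, w.IsPath ∧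
    p = (w.support.tail.dropLast.map MvPolynomial.X).prod}


open MvPolynomial

/-- Lift of a Lie algebra hom through a quotient by an ideal contained in the kernel. -/
noncomputable def lieQuotLift {R L L₂ : Type*} [CommRing R] [LieRing L] [LieAlgebra R L]
    [LieRing L₂] [LieAlgebra R L₂] (I : LieIdeal R L) (f : L →ₗ⁅R⁆ L₂)
    (h : I ≤ f.ker) : (L ⧸ I) →ₗ⁅R⁆ L₂ :=
  { Submodule.liftQ (I : Submodule R L) (f : L →ₗ[R] L₂)
      (fun x hx => by simpa using (LieHom.mem_ker).1 (h hx)) with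
    map_lie' := by
      intro x y
      induction x using Quotient.inductionOn' with | h x =>
      induction y using Quotient.inductionOn' with | h y =>
      show Submodule.liftQ _ _ _ ⁅LieSubmodule.Quotient.mk (N := I) x,
          LieSubmodule.Quotient.mk (N := I) y⁆ = _
      rw [← LieSubmodule.Quotient.mk_bracket]
      simp only [LieSubmodule.Quotient.mk, Submodule.liftQ_apply, LieHom.coe_toLinearMap,
        LieHom.map_lie]
      exact f.map_lie x y }

@[simp] lemma lieQuotLift_mk {R L L₂ : Type*} [CommRing R] [LieRing L] [LieAlgebra R L]
    [LieRing L₂] [LieAlgebra R L₂] (I : LieIdeal R L) (f : L →ₗ⁅R⁆ L₂)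
    (h : I ≤ f.ker) (x : L) :
    lieQuotLift I f h (LieSubmodule.Quotient.mk (N := I) x) = f x := rfl

section ModelDef
variable (R : Type) [CommRing R] {A K : Type} [CommRing K] [Algebra R K]

/-- Carrier of the model metabelian Lie algebra determined by `ξ w : A → K`. -/
def PCModel (ξ w : A → K) : Type := (A →₀ R) × K

namespace PCModel
variable {R} {ξ w : A → K}

def mk2 (f : A →₀ R) (u : K) : PCModel R ξ w := (f, u)
def fst (x : PCModel R ξ w) : A →₀ R := (show (A →₀ R) × K from x).1
def snd (x : PCModel R ξ w) : K := (show (A →₀ R) × K from x).2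

noncomputable instance : AddCommGroup (PCModel R ξ w) := inferInstanceAs (AddCommGroup ((A →₀ R) × K))
noncomputable instance : Module R (PCModel R ξ w) := inferInstanceAs (Module R ((A →₀ R) × K))

@[simp] lemma fst_mk2 (f : A →₀ R) (u : K) : (mk2 (ξ := ξ) (w := w) f u).fst = f := rfl
@[simp] lemma snd_mk2 (f : A →₀ R) (u : K) : (mk2 (ξ := ξ) (w := w) f u).snd = u := rfl
@[simp] lemma fst_add (x y : PCModel R ξ w) : (x + y).fst = x.fst + y.fst := rfl
@[simp] lemma snd_add (x y : PCModel R ξ w) : (x + y).snd = x.snd + y.snd := rfl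
@[simp] lemma fst_smul (r : R) (x : PCModel R ξ w) : (r • x).fst = r • x.fst := rfl
@[simp] lemma snd_smul (r : R) (x : PCModel R ξ w) : (r • x).snd = r • x.snd := rfl
@[simp] lemma fst_zero : (0 : PCModel R ξ w).fst = 0 := rfl
@[simp] lemma snd_zero : (0 : PCModel R ξ w).snd = 0 := rfl

@[ext] lemma ext {x y : PCModel R ξ w} (h1 : x.fst = y.fst) (h2 : x.snd = y.snd) : x = y :=
  Prod.ext h1 h2

variable (ξ w)

/-- `f ↦ Σ f_a ξ_a`. -/
noncomputable def S : (A →₀ R) →ₗ[R] K := Finsupp.linearCombination R ξ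
/-- `f ↦ Σ f_a ξ_a w_a`. -/
noncomputable def T : (A →₀ R) →ₗ[R] K := Finsupp.linearCombination R (fun a => ξ a * w a)

@[simp] lemma S_single (a : A) : S ξ (Finsupp.single a (1:R)) = ξ a := by
  simp [S]
@[simp] lemma T_single (a : A) : T ξ w (Finsupp.single a (1:R)) = ξ a * w a := by
  simp [T]

variable {ξ w}

noncomputable instance : Bracket (PCModel R ξ w) (PCModel R ξ w) :=
  ⟨fun x y => mk2 0 (T ξ w x.fst * S ξ y.fst - S ξ x.fst * T ξ w y.fst
      + S ξ x.fst * y.snd - S ξ y.fst * x.snd)⟩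

@[simp] lemma bracket_fst (x y : PCModel R ξ w) : (⁅x, y⁆ : PCModel R ξ w).fst = 0 := rfl
@[simp] lemma bracket_snd (x y : PCModel R ξ w) :
    (⁅x, y⁆ : PCModel R ξ w).snd = T ξ w x.fst * S ξ y.fst - S ξ x.fst * T ξ w y.fst
      + S ξ x.fst * y.snd - S ξ y.fst * x.snd := rfl

noncomputable instance : LieRing (PCModel R ξ w) where
  add_lie x y z := by ext <;> simp <;> ring
  lie_add x y z := by ext <;> simp <;> ring
  lie_self x := by ext <;> simp <;> ring
  leibniz_lie x y z := by ext <;> simp <;> ring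

noncomputable instance : LieAlgebra R (PCModel R ξ w) where
  lie_smul r x y := by
    ext <;> simp [smul_sub, smul_add, mul_smul_comm, smul_mul_assoc]

end PCModel
end ModelDef
section ModelHom
variable {R : Type} [CommRing R] {A K : Type} [CommRing K] [Algebra R K]
variable {Γ : SimpleGraph A} (ξ w : A → K)

open PCModel

/-- The canonical hom from the free Lie algebra to the model. -/
noncomputable def pcModelOfFree : FreeLieAlgebra R A →ₗ⁅R⁆ PCModel R ξ w :=
  FreeLieAlgebra.lift R (fun a => PCModel.mk2 (Finsupp.single a 1) 0)

lemma pcModel_bracket_gen (a b : A) :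
    ⁅(mk2 (Finsupp.single a 1) 0 : PCModel R ξ w),
        (mk2 (Finsupp.single b 1) 0 : PCModel R ξ w)⁆
      = (mk2 0 (ξ a * ξ b * (w a - w b)) : PCModel R ξ w) := by
  ext
  · rfl
  · simp; ring

variable (R) in
/-- The zero-first-component ideal of the model. -/
def pcModelZ : LieIdeal R (PCModel R ξ w) where
  carrier := {x | x.fst = 0}
  add_mem' := by intro a b ha hb; simp only [Set.mem_setOf_eq] at *; rw [fst_add, ha, hb, add_zero]
  zero_mem' := rfl
  smul_mem' := by intro r x hx; simp only [Set.mem_setOf_eq] at *; rw [fst_smul, hx, smul_zero]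
  lie_mem := by intro x m _; exact bracket_fst x m

lemma pcModel_derived_le_Z :
    LieAlgebra.derivedSeries R (PCModel R ξ w) 1 ≤ pcModelZ R ξ w := by
  rw [LieAlgebra.derivedSeries_def, LieAlgebra.derivedSeriesOfIdeal_succ,
    LieSubmodule.lieIdeal_oper_eq_span]
  rw [LieSubmodule.lieSpan_le]
  rintro x ⟨y, n, rfl⟩
  exact bracket_fst _ _

lemma pcModel_derived_two :
    LieAlgebra.derivedSeries R (PCModel R ξ w) 2 = ⊥ := by
  rw [eq_bot_iff]
  have h1 : LieAlgebra.derivedSeries R (PCModel R ξ w) 2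
      = ⁅LieAlgebra.derivedSeries R (PCModel R ξ w) 1,
          LieAlgebra.derivedSeries R (PCModel R ξ w) 1⁆ := by
    rw [LieAlgebra.derivedSeries_def, LieAlgebra.derivedSeriesOfIdeal_succ]
  rw [h1]
  refine le_trans (LieSubmodule.mono_lie (pcModel_derived_le_Z ξ w) (pcModel_derived_le_Z ξ w)) ?_
  rw [LieSubmodule.lieIdeal_oper_eq_span, LieSubmodule.lieSpan_le]
  rintro x ⟨y, n, rfl⟩
  have hy : (y : PCModel R ξ w).fst = 0 := y.2
  have hn : (n : PCModel R ξ w).fst = 0 := n.2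
  have h0 : ⁅(y : PCModel R ξ w), (n : PCModel R ξ w)⁆ = 0 := by
    ext
    · rfl
    · rw [bracket_snd, hy, hn]; simp
  rw [h0]
  exact (⊥ : LieIdeal R (PCModel R ξ w)).zero_mem

variable {ξ w}
variable (hedge : ∀ a b : A, Γ.Adj a b → ξ a * ξ b * (w a - w b) = 0)
include hedge

lemma pcModel_rels_le_ker :
    pcLieRels R Γ ≤ (pcModelOfFree (R := R) ξ w).ker := by
  rw [pcLieRels, LieSubmodule.lieSpan_le]
  rintro x ⟨a, b, hab, rfl⟩
  rw [SetLike.mem_coe, LieHom.mem_ker, LieHom.map_lie]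
  rw [pcModelOfFree, FreeLieAlgebra.lift_of_apply, FreeLieAlgebra.lift_of_apply,
    pcModel_bracket_gen, hedge a b hab]
  rfl

/-- The first induced hom on the partially commutative Lie algebra. -/
noncomputable def pcModelHom₁ : pcLieAlgebra R Γ →ₗ⁅R⁆ PCModel R ξ w :=
  lieQuotLift (pcLieRels R Γ) (pcModelOfFree ξ w) (pcModel_rels_le_ker hedge)

lemma pcModel_derived2_le_ker :
    LieAlgebra.derivedSeries R (pcLieAlgebra R Γ) 2 ≤ (pcModelHom₁ hedge).ker := by
  have h := LieIdeal.derivedSeries_map_le (R := R) (f := pcModelHom₁ hedge) 2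
  rw [pcModel_derived_two, le_bot_iff] at h
  intro x hx
  rw [LieHom.mem_ker]
  have h2 := LieIdeal.mem_map (f := pcModelHom₁ hedge) hx
  rw [h] at h2
  simpa using h2

/-- The induced hom on the partially commutative metabelian Lie algebra. -/
noncomputable def pcModelHom : pcMetabelianLieAlgebra R Γ →ₗ⁅R⁆ PCModel R ξ w :=
  lieQuotLift _ (pcModelHom₁ hedge) (pcModel_derived2_le_ker hedge)

lemma pcModelHom_gen (a : A) :
    pcModelHom hedge (pcMetLieGen R Γ a) = (mk2 (Finsupp.single a 1) 0 : PCModel R ξ w) := by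
  rw [pcMetLieGen, pcModelHom, lieQuotLift_mk, pcLieGen, pcModelHom₁, lieQuotLift_mk,
    pcModelOfFree, FreeLieAlgebra.lift_of_apply]

lemma pcModelHom_fst (y : pcMetabelianLieAlgebra R Γ) (hy : y ∈ pcMetDerivedIdeal R Γ) :
    (pcModelHom hedge y).fst = 0 := by
  have h := LieIdeal.derivedSeries_map_le (R := R) (f := pcModelHom hedge) 1
  have h2 := LieIdeal.mem_map (f := pcModelHom hedge) hy
  exact pcModel_derived_le_Z ξ w (h h2)

lemma pcModelHom_bracketGen (a b : A) :
    (pcModelHom hedge ((pcBracketGen R Γ a b : pcMetDerivedIdeal R Γ) :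
      pcMetabelianLieAlgebra R Γ)).snd = ξ a * ξ b * (w a - w b) := by
  show (pcModelHom hedge ⁅pcMetLieGen R Γ a, pcMetLieGen R Γ b⁆).snd = _
  rw [LieHom.map_lie, pcModelHom_gen, pcModelHom_gen, pcModel_bracket_gen]
  rfl

lemma pcModelHom_ad (a : A) (y : pcMetDerivedIdeal R Γ) :
    (pcModelHom hedge ((pcAdEnd R Γ (pcMetLieGen R Γ a) y : pcMetDerivedIdeal R Γ) :
      pcMetabelianLieAlgebra R Γ)).snd
      = ξ a * (pcModelHom hedge (y : pcMetabelianLieAlgebra R Γ)).snd := by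
  show (pcModelHom hedge ⁅pcMetLieGen R Γ a, (y : pcMetabelianLieAlgebra R Γ)⁆).snd = _
  rw [LieHom.map_lie, pcModelHom_gen, bracket_snd]
  rw [pcModelHom_fst hedge _ y.2]
  simp

lemma pcModelHom_phi (φ : MvPolynomial A R →ₐ[R] Module.End R (pcMetDerivedIdeal R Γ))
    (hφ : ∀ a : A, φ (MvPolynomial.X a) = pcAdEnd R Γ (pcMetLieGen R Γ a))
    (p : MvPolynomial A R) (y : pcMetDerivedIdeal R Γ) :
    (pcModelHom hedge ((φ p y : pcMetDerivedIdeal R Γ) : pcMetabelianLieAlgebra R Γ)).snd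
      = MvPolynomial.aeval ξ p * (pcModelHom hedge (y : pcMetabelianLieAlgebra R Γ)).snd := by
  induction p using MvPolynomial.induction_on generalizing y with
  | C r =>
    have h1 : φ (MvPolynomial.C r) y = r • y := by
      rw [← MvPolynomial.algebraMap_eq, AlgHom.commutes, Module.algebraMap_end_apply]
    have h2 : ((r • y : pcMetDerivedIdeal R Γ) : pcMetabelianLieAlgebra R Γ)
        = r • ((y : pcMetDerivedIdeal R Γ) : pcMetabelianLieAlgebra R Γ) := rfl
    rw [h1, h2, map_smul, snd_smul, ← MvPolynomial.algebraMap_eq, AlgHom.commutes,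
      Algebra.smul_def]
  | add p q hp hq =>
    have h2 : ((φ p y + φ q y : pcMetDerivedIdeal R Γ) : pcMetabelianLieAlgebra R Γ)
        = ((φ p y : pcMetDerivedIdeal R Γ) : pcMetabelianLieAlgebra R Γ)
          + ((φ q y : pcMetDerivedIdeal R Γ) : pcMetabelianLieAlgebra R Γ) := rfl
    rw [map_add, LinearMap.add_apply, h2, map_add, snd_add, hp, hq, map_add, add_mul]
  | mul_X p a hp =>
    rw [map_mul, Module.End.mul_apply, hp (φ (MvPolynomial.X a) y), hφ a, pcModelHom_ad,
      map_mul, MvPolynomial.aeval_X]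
    ring

lemma pcModelHom_main (φ : MvPolynomial A R →ₐ[R] Module.End R (pcMetDerivedIdeal R Γ))
    (hφ : ∀ a : A, φ (MvPolynomial.X a) = pcAdEnd R Γ (pcMetLieGen R Γ a))
    (ai aj : A) (p : MvPolynomial A R) (hp : φ p (pcBracketGen R Γ ai aj) = 0) :
    MvPolynomial.aeval ξ p * (ξ ai * ξ aj * (w ai - w aj)) = 0 := by
  have h1 := pcModelHom_phi hedge φ hφ p (pcBracketGen R Γ ai aj)
  rw [pcModelHom_bracketGen hedge ai aj, hp] at h1
  have h2 : ((0 : pcMetDerivedIdeal R Γ) : pcMetabelianLieAlgebra R Γ) = 0 := rfl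
  rw [h2, map_zero] at h1
  have h3 : (0 : PCModel R ξ w).snd = 0 := rfl
  rw [h3] at h1
  exact h1.symm

end ModelHom
section GraphSpec
open MvPolynomial
variable {A : Type} (Γ : SimpleGraph A) (S : Set A)

/-- `Γ` with the vertices of `S` deleted, as a graph on `A`. -/
def pcDel : SimpleGraph A where
  Adj a b := Γ.Adj a b ∧ a ∉ S ∧ b ∉ S
  symm := ⟨by rintro a b ⟨h, ha, hb⟩; exact ⟨h.symm, hb, ha⟩⟩
  loopless := ⟨by rintro a ⟨h, -⟩; exact Γ.irrefl h⟩

lemma pcDel_support_not_mem : ∀ {x y : A} (wk : (pcDel Γ S).Walk x y), x ∉ S →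
    ∀ a ∈ wk.support, a ∉ S := by
  intro x y wk
  induction wk with
  | nil => intro hx a ha; rw [SimpleGraph.Walk.support_nil, List.mem_singleton] at ha
           exact ha ▸ hx
  | cons h wk ih =>
    intro hx a ha
    rw [SimpleGraph.Walk.support_cons, List.mem_cons] at ha
    rcases ha with rfl | ha
    · exact hx
    · exact ih h.2.2 a ha

open Classical in
/-- The specialization sending the variables of `S` to zero. -/
noncomputable def pcXi (R : Type) [CommRing R] : A → MvPolynomial A R :=
  fun a => if a ∈ S then 0 else X a

open Classical in
/-- Indicator of reachability from `ai` in `Γ` minus `S`. -/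
noncomputable def pcW (R : Type) [CommRing R] (ai : A) : A → MvPolynomial A R :=
  fun a => if (pcDel Γ S).Reachable ai a then 1 else 0

variable (R : Type) [CommRing R] (ai : A)

lemma pcXi_of_not_mem {a : A} (ha : a ∉ S) : pcXi S R a = X a := if_neg ha

lemma pcW_edge : ∀ a b : A, Γ.Adj a b →
    pcXi S R a * pcXi S R b * (pcW Γ S R ai a - pcW Γ S R ai b) = 0 := by
  intro a b hab
  by_cases ha : a ∈ S
  · rw [pcXi, if_pos ha, zero_mul, zero_mul]
  by_cases hb : b ∈ S
  · rw [pcXi, pcXi]; rw [if_pos hb, mul_zero, zero_mul]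
  have hadj : (pcDel Γ S).Adj a b := ⟨hab, ha, hb⟩
  have hw : pcW Γ S R ai a = pcW Γ S R ai b := by
    rw [pcW, pcW]
    by_cases hr : (pcDel Γ S).Reachable ai a
    · rw [if_pos hr, if_pos (hr.trans hadj.reachable)]
    · rw [if_neg hr, if_neg (fun hr2 => hr (hr2.trans hadj.symm.reachable))]
  rw [hw, sub_self, mul_zero]

variable [IsDomain R] {Γ} {ai}

lemma pcAeval_eq_zero {aj : A}
    (φ : MvPolynomial A R →ₐ[R] Module.End R (pcMetDerivedIdeal R Γ))
    (hφ : ∀ a : A, φ (MvPolynomial.X a) = pcAdEnd R Γ (pcMetLieGen R Γ a))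
    (p : MvPolynomial A R) (hp : φ p (pcBracketGen R Γ ai aj) = 0)
    (hai : ai ∉ S) (haj : aj ∉ S) (hnr : ¬ (pcDel Γ S).Reachable ai aj) :
    MvPolynomial.aeval (pcXi S R) p = 0 := by
  have h := pcModelHom_main (ξ := pcXi S R) (w := pcW Γ S R ai) (pcW_edge Γ S R ai) φ hφ ai aj p hp
  rw [pcXi_of_not_mem S R hai, pcXi_of_not_mem S R haj] at h
  rw [pcW, pcW, if_pos (SimpleGraph.Reachable.refl ai), if_neg hnr, sub_zero, mul_one] at h
  rcases mul_eq_zero.1 h with h1 | h2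
  · exact h1
  · exact absurd h2 (mul_ne_zero (X_ne_zero ai) (X_ne_zero aj))

end GraphSpec
section CoeffLemma
open MvPolynomial
variable {A : Type} {R : Type} [CommRing R]

lemma pcAeval_monomial_good (S : Set A) (β : A →₀ ℕ) (c : R)
    (hβ : ∀ s ∈ β.support, s ∉ S) :
    MvPolynomial.aeval (pcXi S R) (monomial β c) = monomial β c := by
  rw [aeval_monomial, MvPolynomial.algebraMap_eq]
  have h : (β.prod fun i k => pcXi S R i ^ k) = β.prod fun i k => (X i : MvPolynomial A R) ^ k :=
    Finsupp.prod_congr (fun s hs => by rw [pcXi_of_not_mem S R (hβ s hs)])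
  rw [h, ← monomial_eq]

lemma pcAeval_monomial_bad (S : Set A) (β : A →₀ ℕ) (c : R)
    {s : A} (hs : s ∈ β.support) (hsS : s ∈ S) :
    MvPolynomial.aeval (pcXi S R) (monomial β c) = 0 := by
  rw [aeval_monomial]
  have h : (β.prod fun i k => pcXi S R i ^ k) = 0 := by
    rw [Finsupp.prod]
    refine Finset.prod_eq_zero hs ?_
    rw [pcXi, if_pos hsS, zero_pow (Finsupp.mem_support_iff.1 hs)]
  rw [h, mul_zero]

lemma pcCoeff_aeval (S : Set A) (α : A →₀ ℕ) (hα : ∀ a ∈ α.support, a ∉ S)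
    (p : MvPolynomial A R) :
    MvPolynomial.coeff α (MvPolynomial.aeval (pcXi S R) p) = MvPolynomial.coeff α p := by
  classical
  have hrep := support_sum_monomial_coeff p
  calc MvPolynomial.coeff α (MvPolynomial.aeval (pcXi S R) p)
      = ∑ β ∈ p.support, MvPolynomial.coeff α (MvPolynomial.aeval (pcXi S R)
          (monomial β (coeff β p))) := by
        conv_lhs => rw [← hrep]
        rw [map_sum, coeff_sum]
    _ = ∑ β ∈ p.support, MvPolynomial.coeff α (monomial β (coeff β p)) := by
        refine Finset.sum_congr rfl ?_
        intro β _
        by_cases hgood : ∀ s ∈ β.support, s ∉ S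
        · rw [pcAeval_monomial_good S β _ hgood]
        · push_neg at hgood
          obtain ⟨s, hs, hsS⟩ := hgood
          rw [pcAeval_monomial_bad S β _ hs hsS, coeff_zero, coeff_monomial]
          have hne : β ≠ α := by
            rintro rfl
            exact hα s hs hsS
          rw [if_neg hne]
    _ = MvPolynomial.coeff α p := by
        conv_rhs => rw [← hrep]
        rw [coeff_sum]

end CoeffLemma
section EasyDir
open MvPolynomial
variable {R : Type} [CommRing R] {A : Type} {Γ : SimpleGraph A}

lemma pcBracket_adj_eq_zero {a b : A} (hab : Γ.Adj a b) :
    ⁅pcMetLieGen R Γ a, pcMetLieGen R Γ b⁆ = 0 := by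
  have h1 : ⁅pcLieGen R Γ a, pcLieGen R Γ b⁆ = 0 := by
    rw [pcLieGen, pcLieGen, ← LieSubmodule.Quotient.mk_bracket,
      LieSubmodule.Quotient.mk_eq_zero']
    exact LieSubmodule.subset_lieSpan ⟨a, b, hab, rfl⟩
  rw [pcMetLieGen, pcMetLieGen, ← LieSubmodule.Quotient.mk_bracket, h1]
  rfl

lemma pcBracketGen_adj_eq_zero {a b : A} (hab : Γ.Adj a b) :
    pcBracketGen R Γ a b = 0 :=
  Subtype.ext (pcBracket_adj_eq_zero hab)

lemma pcJacobi_step {x c y : A} (h : Γ.Adj x c) :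
    pcAdEnd R Γ (pcMetLieGen R Γ c) (pcBracketGen R Γ x y)
      = pcAdEnd R Γ (pcMetLieGen R Γ x) (pcBracketGen R Γ c y) := by
  apply Subtype.ext
  show ⁅pcMetLieGen R Γ c, ⁅pcMetLieGen R Γ x, pcMetLieGen R Γ y⁆⁆
      = ⁅pcMetLieGen R Γ x, ⁅pcMetLieGen R Γ c, pcMetLieGen R Γ y⁆⁆
  have h0 : ⁅pcMetLieGen R Γ c, pcMetLieGen R Γ x⁆ = 0 := by
    rw [← lie_skew, pcBracket_adj_eq_zero h, neg_zero]
  rw [leibniz_lie, h0, zero_lie, zero_add]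

lemma pcWalk_ann (φ : MvPolynomial A R →ₐ[R] Module.End R (pcMetDerivedIdeal R Γ))
    (hφ : ∀ a : A, φ (MvPolynomial.X a) = pcAdEnd R Γ (pcMetLieGen R Γ a)) :
    ∀ {x y : A} (wk : Γ.Walk x y), ¬ wk.Nil →
      φ ((wk.support.tail.dropLast.map X).prod) (pcBracketGen R Γ x y) = 0 := by
  intro x y wk
  induction wk with
  | nil => intro hn; exact absurd SimpleGraph.Walk.Nil.nil hn
  | @cons x u y h wk ih =>
    intro _
    cases wk with
    | nil =>
      rw [SimpleGraph.Walk.support_cons, SimpleGraph.Walk.support_nil, List.tail_cons,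
        List.dropLast_singleton, List.map_nil, List.prod_nil, map_one, Module.End.one_apply,
        pcBracketGen_adj_eq_zero h]
    | @cons u v y h' wk' =>
      rw [SimpleGraph.Walk.support_cons, SimpleGraph.Walk.support_cons]
      show φ (((u :: wk'.support).dropLast.map X).prod) (pcBracketGen R Γ x y) = 0
      rw [List.dropLast_cons_of_ne_nil (SimpleGraph.Walk.support_ne_nil wk'), List.map_cons,
        List.prod_cons, mul_comm, map_mul, Module.End.mul_apply, hφ u, pcJacobi_step h,
        ← hφ x, ← Module.End.mul_apply, ← map_mul, mul_comm, map_mul, Module.End.mul_apply]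
      have hm :
          φ ((((SimpleGraph.Walk.cons h' wk').support.tail.dropLast).map X).prod)
            (pcBracketGen R Γ u y) = 0 := ih SimpleGraph.Walk.not_nil_cons
      rw [SimpleGraph.Walk.support_cons, List.tail_cons] at hm
      show φ (MvPolynomial.X x) (φ ((wk'.support.dropLast.map X).prod)
        (pcBracketGen R Γ u y)) = 0
      rw [hm, map_zero]

variable (φ : MvPolynomial A R →ₐ[R] Module.End R (pcMetDerivedIdeal R Γ))

/-- The annihilator of an element of the derived ideal, as an ideal of the polynomial ring. -/
def pcAnnIdeal (e : pcMetDerivedIdeal R Γ) : Ideal (MvPolynomial A R) where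
  carrier := {p | φ p e = 0}
  add_mem' := by
    intro a b ha hb
    simp only [Set.mem_setOf_eq] at *
    rw [map_add, LinearMap.add_apply, ha, hb, add_zero]
  zero_mem' := by simp
  smul_mem' := by
    intro c x hx
    simp only [Set.mem_setOf_eq, smul_eq_mul] at *
    rw [map_mul, Module.End.mul_apply, hx, map_zero]

lemma pcPath_le_ann (hφ : ∀ a : A, φ (MvPolynomial.X a) = pcAdEnd R Γ (pcMetLieGen R Γ a))
    (ai aj : A) (hne : ai ≠ aj) :
    pcPathIdeal R Γ ai aj ≤ pcAnnIdeal φ (pcBracketGen R Γ ai aj) := by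
  rw [pcPathIdeal]
  rw [Ideal.span_le]
  rintro q ⟨wk, hwk, rfl⟩
  exact pcWalk_ann φ hφ wk (SimpleGraph.Walk.not_nil_of_ne hne)

end EasyDir
section Final
open MvPolynomial
variable {R : Type} [CommRing R] {A : Type} {Γ : SimpleGraph A}

lemma pcList_dvd_monomial {l : List A} (hl : l.Nodup) (α : A →₀ ℕ)
    (hmem : ∀ a ∈ l, α a ≠ 0) (c : R) :
    (l.map X).prod ∣ monomial α c := by
  classical
  induction l generalizing α with
  | nil => simp
  | cons a t ih =>
    have hαa : α a ≠ 0 := hmem a List.mem_cons_self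
    have hsum : Finsupp.single a 1 + (α - Finsupp.single a 1) = α := by
      ext b
      rw [Finsupp.add_apply, Finsupp.tsub_apply]
      by_cases hb : b = a
      · subst hb
        rw [Finsupp.single_eq_same]
        omega
      · rw [Finsupp.single_eq_of_ne' (fun he => hb he.symm)]
        omega
    have hstep : monomial α c = X a * monomial (α - Finsupp.single a 1) c := by
      conv_lhs => rw [← hsum]
      rw [monomial_single_add, pow_one]
    rw [List.map_cons, List.prod_cons, hstep]
    refine mul_dvd_mul_left _ (ih (List.Nodup.of_cons hl) _ ?_)
    intro b hb
    have hba : b ≠ a := by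
      rintro rfl
      exact (List.nodup_cons.1 hl).1 hb
    rw [Finsupp.tsub_apply, Finsupp.single_eq_of_ne' (fun he => hba he.symm)]
    have := hmem b (List.mem_cons_of_mem a hb)
    omega

lemma pcNodup_getLast_not_mem_dropLast {α : Type} {l : List α} (hl : l.Nodup) (h : l ≠ []) :
    l.getLast h ∉ l.dropLast := by
  intro hmem
  have heq := List.dropLast_append_getLast h
  rw [← heq] at hl
  rcases List.nodup_append.1 hl with ⟨-, -, hdisj⟩
  exact hdisj _ hmem _ (List.mem_singleton_self _) rfl

lemma pcGetLast_eq_of_eq_cons {B : Type} {l m : List B} {a : B} (h : l = a :: m)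
    (hm : m ≠ []) (hl : l ≠ []) : l.getLast hl = m.getLast hm := by
  subst h
  exact List.getLast_cons hm

lemma pcMonomial_mem (ai aj : A) (hne : ai ≠ aj) {α : A →₀ ℕ} (c : R)
    (hr : (pcDel Γ {a | a ∉ α.support ∧ a ≠ ai ∧ a ≠ aj}).Reachable ai aj) :
    monomial α c ∈ pcPathIdeal R Γ ai aj := by
  classical
  set S : Set A := {a | a ∉ α.support ∧ a ≠ ai ∧ a ≠ aj} with hS
  obtain ⟨wk0⟩ := hr
  obtain ⟨wk, hwkpath⟩ := wk0.toPath
  have hle : pcDel Γ S ≤ Γ := by intro a b h; exact h.1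
  have hedges : ∀ e ∈ wk.edges, e ∈ Γ.edgeSet :=
    fun e he => SimpleGraph.edgeSet_mono hle (wk.edges_subset_edgeSet he)
  set wΓ : Γ.Walk ai aj := wk.transfer Γ hedges with hwΓ
  have hpathΓ : wΓ.IsPath := SimpleGraph.Walk.IsPath.transfer hedges hwkpath
  have hsupp : wΓ.support = wk.support := SimpleGraph.Walk.support_transfer wk hedges
  set l : List A := wΓ.support.tail.dropLast with hl
  have hsubl : l.Sublist wΓ.support :=
    (List.dropLast_sublist _).trans (List.tail_sublist _)
  have hnodup : l.Nodup := hsubl.nodup hpathΓ.support_nodup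
  -- every element of l has nonzero exponent in α
  have hail : ai ∉ l := by
    intro hmem
    have h2 := hpathΓ.support_nodup
    rw [SimpleGraph.Walk.support_eq_cons] at h2
    exact (List.nodup_cons.1 h2).1 ((List.dropLast_sublist _).subset hmem)
  have hajl : aj ∉ l := by
    by_cases hte : wΓ.support.tail = []
    · rw [hl, hte]
      simp
    · have hlast : wΓ.support.tail.getLast hte = aj := by
        have h3 := pcGetLast_eq_of_eq_cons (SimpleGraph.Walk.support_eq_cons wΓ) hte
          (SimpleGraph.Walk.support_ne_nil wΓ)
        exact h3.symm.trans (SimpleGraph.Walk.getLast_support wΓ)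
      have h4 := pcNodup_getLast_not_mem_dropLast
        ((List.tail_sublist _).nodup hpathΓ.support_nodup) hte
      rw [hlast] at h4
      exact h4
  have hmem : ∀ a ∈ l, α a ≠ 0 := by
    intro a ha
    have haS : a ∉ S := by
      refine pcDel_support_not_mem Γ S wk ?_ a ?_
      · simp [hS, hne]
      · rw [← hsupp]; exact hsubl.subset ha
    simp only [hS, Set.mem_setOf_eq, not_and_or, not_not] at haS
    rcases haS with h5 | h5 | h5
    · exact Finsupp.mem_support_iff.1 h5
    · exact absurd h5 (fun he => hail (he ▸ ha))
    · exact absurd h5 (fun he => hajl (he ▸ ha))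
  obtain ⟨q, hq⟩ := pcList_dvd_monomial hnodup α hmem c
  rw [hq]
  refine Ideal.mul_mem_right _ _ (Ideal.subset_span ?_)
  exact ⟨wΓ, hpathΓ, rfl⟩

lemma pcAnn_le_path [IsDomain R]
    (φ : MvPolynomial A R →ₐ[R] Module.End R (pcMetDerivedIdeal R Γ))
    (hφ : ∀ a : A, φ (MvPolynomial.X a) = pcAdEnd R Γ (pcMetLieGen R Γ a))
    (ai aj : A) (hne : ai ≠ aj) (p : MvPolynomial A R)
    (hp : φ p (pcBracketGen R Γ ai aj) = 0) :
    p ∈ pcPathIdeal R Γ ai aj := by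
  classical
  rw [← support_sum_monomial_coeff p]
  refine Ideal.sum_mem _ ?_
  intro α hα
  by_cases hr : (pcDel Γ {a | a ∉ α.support ∧ a ≠ ai ∧ a ≠ aj}).Reachable ai aj
  · exact pcMonomial_mem ai aj hne _ hr
  · exfalso
    set S : Set A := {a | a ∉ α.support ∧ a ≠ ai ∧ a ≠ aj} with hS
    have hdisj : ∀ a ∈ α.support, a ∉ S := by
      intro a ha haS
      exact haS.1 ha
    have hai : ai ∉ S := by simp [hS]
    have haj : aj ∉ S := by simp [hS, hne.symm]
    have h0 : coeff α p = 0 := by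
      rw [← pcCoeff_aeval S α hdisj p,
        pcAeval_eq_zero S R φ hφ p hp hai haj hr, coeff_zero]
    exact (mem_support_iff.1 hα) h0

end Final

theorem stmt18 (R : Type) [CommRing R] [IsDomain R] [Infinite R] (hchar : ringChar R ≠ 2)
    {A : Type} [Fintype A] (Γ : SimpleGraph A) (ai aj : A) (hne : ai ≠ aj)
    (hadj : ¬ Γ.Adj ai aj)
    (φ : MvPolynomial A R →ₐ[R] Module.End R (pcMetDerivedIdeal R Γ))
    (hφ : ∀ a : A, φ (MvPolynomial.X a) = pcAdEnd R Γ (pcMetLieGen R Γ a)) :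
    {p : MvPolynomial A R | φ p (pcBracketGen R Γ ai aj) = 0} =
      (pcPathIdeal R Γ ai aj : Set (MvPolynomial A R)) := by
  apply Set.eq_of_subset_of_subset
  · intro p hp
    exact pcAnn_le_path φ hφ ai aj hne p hp
  · intro p hp
    exact pcPath_le_ann φ hφ ai aj hne hp
end
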